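/- Let C and D be cartesian categories, let Σ_D ⊣ D* be an adjunction with Σ_D : D ⥤ C, and let L ⊣ R be an adjunction with L : C ⥤ D such that there is a natural isomorphism Σ_D ∘ L ≅ Id_C and such that L ⊣ R satisfies Frobenius reciprocity. If W is an object of D for which the unique morphism !_W : W ⟶ 1 to the terminal object of D is an effective descent morphism, then the unique morphism !_{R W} : R W ⟶ 1 to the terminal object of C is an effective descent morphism. -/

import Mathlib

open CategoryTheory Limits

universe v₁ v₂ v₃ u₁ u₂ u₃

/-- An adjunction `L ⊣ R` (with `L : D ⥤ C`) satisfies Frobenius reciprocity if the canonical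
morphism `L (W ⨯ R X) ⟶ L W ⨯ X`, with components `L π₁` and `ε_X ∘ L π₂`, is an isomorphism
for all objects `W` of `D` and `X` of `C`. -/
def FrobeniusReciprocity {D : Type u₁} [Category.{v₁} D] {C : Type u₂} [Category.{v₂} C]
    [HasFiniteLimits C] [HasFiniteLimits D]
    {L : D ⥤ C} {R : C ⥤ D} (adj : L ⊣ R) : Prop :=
  ∀ (W : D) (X : C),
    IsIso (prod.lift (L.map (prod.fst : W ⨯ R.obj X ⟶ W))
      (L.map (prod.snd : W ⨯ R.obj X ⟶ R.obj X) ≫ adj.counit.app X))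

/-- A morphism `f : X ⟶ Y` of a cartesian category is an effective descent morphism if the
pullback functor `f* : C/Y ⥤ C/X` is monadic. -/
def EffectiveDescentMorphism {C : Type u₁} [Category.{v₁} C] [HasFiniteLimits C]
    {X Y : C} (f : X ⟶ Y) : Prop :=
  Nonempty (MonadicRightAdjoint (Over.pullback f))

namespace FrobeniusSplitAux

section Transport

variable {A : Type u₁} [Category.{v₁} A] {B : Type u₂} [Category.{v₂} B]

/-- transport a split pair along a natural isomorphism of functors -/
lemma hasSplitCoequalizer_of_natIso {F₁ F₂ : A ⥤ B} (e : F₁ ≅ F₂) {x y : A} (f g : x ⟶ y)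
    [HasSplitCoequalizer (F₁.map f) (F₁.map g)] :
    HasSplitCoequalizer (F₂.map f) (F₂.map g) := by
  obtain ⟨Z, π, ⟨q⟩⟩ := HasSplitCoequalizer.splittable (f := F₁.map f) (g := F₁.map g)
  refine ⟨⟨Z, e.inv.app y ≫ π, ⟨⟨q.rightSection ≫ e.hom.app y,
    e.inv.app y ≫ q.leftSection ≫ e.hom.app x, ?_, ?_, ?_, ?_⟩⟩⟩⟩
  · rw [← Category.assoc, e.inv.naturality f, ← Category.assoc, e.inv.naturality g,
      Category.assoc, Category.assoc, q.condition]
  · simp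
  · rw [Category.assoc, Category.assoc, ← e.hom.naturality g, q.leftSection_bottom_assoc,
      Iso.inv_hom_id_app]
  · rw [Category.assoc, Category.assoc, ← e.hom.naturality f, q.leftSection_top_assoc]
    simp

/-- any functor preserves the colimit of a pair admitting a split coequalizer -/
lemma preservesColimit_parallelPair_of_split (F : A ⥤ B) {x y : A} (u v : x ⟶ y)
    [HasSplitCoequalizer u v] : PreservesColimit (parallelPair u v) F :=
  let q := HasSplitCoequalizer.isSplitCoequalizer u v
  preservesColimit_of_preserves_colimit_cocone q.isCoequalizer
    ((isColimitMapCoconeCoforkEquiv F q.condition).symm (q.map F).isCoequalizer)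

lemma isIso_of_isIso_left {X : A} {a b : Over X} (u : a ⟶ b) (h : IsIso u.left) : IsIso u := by
  haveI := h
  exact ⟨⟨Over.homMk (inv u.left) (by rw [IsIso.inv_comp_eq, Over.w]),
    by ext; simp, by ext; simp⟩⟩

end Transport

section Main

variable {C : Type u₁} [Category.{v₁} C] {D : Type u₂} [Category.{v₂} D]
variable [HasFiniteLimits C] [HasFiniteLimits D]

/-- The lift of a functor to the slices over the terminal objects. -/
noncomputable def hat (F : C ⥤ D) : Over (⊤_ C) ⥤ Over (⊤_ D) :=
  Over.post F ⋙ Over.map (terminal.from _)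

noncomputable def hatCompForget (F : C ⥤ D) :
    hat F ⋙ Over.forget (⊤_ D) ≅ Over.forget (⊤_ C) ⋙ F :=
  Iso.refl _

lemma preservesColimit_hat {J : Type w} [Category.{w'} J] {F : C ⥤ D} {F' : D ⥤ C}
    (adjF : F ⊣ F') (K : J ⥤ Over (⊤_ C)) : PreservesColimit K (hat F) := by
  haveI : PreservesColimitsOfSize.{w', w} F := adjF.leftAdjoint_preservesColimits
  haveI : PreservesColimitsOfSize.{w', w} (Over.forget (⊤_ C)) :=
    (Over.forgetAdjStar _).leftAdjoint_preservesColimits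
  haveI : PreservesColimit K (hat F ⋙ Over.forget (⊤_ D)) :=
    preservesColimit_of_natIso K (hatCompForget F).symm
  exact preservesColimit_of_reflects_of_preserves (hat F) (Over.forget (⊤_ D))

variable {SigD : D ⥤ C} {Dstar : C ⥤ D} {L : C ⥤ D} {R : D ⥤ C}

/-- The lift of `L` to a functor `C/RW ⥤ D/W`. -/
noncomputable def barL (adj : L ⊣ R) (W : D) : Over (R.obj W) ⥤ Over W :=
  Over.post L ⋙ Over.map (adj.counit.app W)

/-- The canonical comparison between the two composites in the Frobenius square. -/
noncomputable def theta (adj : L ⊣ R) (W : D) :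
    Over.pullback (terminal.from (R.obj W)) ⋙ barL adj W ⟶
      hat L ⋙ Over.pullback (terminal.from W) where
  app x := Over.homMk
    (pullback.lift (L.map (pullback.fst x.hom (terminal.from (R.obj W))))
      (L.map (pullback.snd x.hom (terminal.from (R.obj W))) ≫ adj.counit.app W)
      (by apply terminal.hom_ext))
    (by exact pullback.lift_snd _ _ _)
  naturality x y u := by
    ext
    apply pullback.hom_ext
    · simp only [Functor.comp_map, Over.comp_left, Category.assoc]
      erw [pullback.lift_fst, pullback.lift_fst, Over.map_map_left, Over.map_map_left,
        pullback.lift_fst_assoc]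
      simp [← L.map_comp]
      erw [← L.map_comp, ← L.map_comp, pullback.lift_fst]
    · simp only [Functor.comp_map, Over.comp_left, Category.assoc]
      erw [pullback.lift_snd, pullback.lift_snd, Over.map_map_left, pullback.lift_snd]
      simp [← L.map_comp_assoc]
      erw [← L.map_comp_assoc, pullback.lift_snd]
      rfl

/-- The splitting iso lifted to the slices over the terminal objects. -/
noncomputable def shat (splitting : L ⋙ SigD ≅ 𝟭 C) :
    hat L ⋙ hat SigD ≅ 𝟭 (Over (⊤_ C)) :=
  NatIso.ofComponents
    (fun x => Over.isoMk (splitting.app x.left) (by apply terminal.hom_ext))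
    (fun {x y} u => by
      ext
      exact splitting.hom.naturality u.left)

lemma aux_fst {X Y : D} {f : X ⟶ ⊤_ D} (h : terminal.from X = f) :
    (prodIsoPullback X Y ≪≫ pullback.congrHom h rfl).hom ≫ pullback.fst f (terminal.from Y) =
      prod.fst := by
  subst h; simp

lemma aux_snd {X Y : D} {f : X ⟶ ⊤_ D} (h : terminal.from X = f) :
    (prodIsoPullback X Y ≪≫ pullback.congrHom h rfl).hom ≫ pullback.snd f (terminal.from Y) =
      prod.snd := by
  subst h; simp

lemma isIso_theta_app (adj : L ⊣ R) (frob : FrobeniusReciprocity adj) (W : D)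
    (x : Over (⊤_ C)) : IsIso ((theta adj W).app x) := by
  haveI := frob x.left W
  let k₁ : x.left ⨯ R.obj W ≅ pullback x.hom (terminal.from (R.obj W)) :=
    prodIsoPullback x.left (R.obj W) ≪≫ pullback.congrHom (Subsingleton.elim _ _) rfl
  let k₂ : L.obj x.left ⨯ W ≅ pullback ((hat L).obj x).hom (terminal.from W) :=
    prodIsoPullback (L.obj x.left) W ≪≫ pullback.congrHom (Subsingleton.elim _ _) rfl
  have c₁ : k₁.hom ≫ pullback.fst x.hom (terminal.from (R.obj W)) = prod.fst := by
    exact aux_fst (Subsingleton.elim _ _)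
  have c₂ : k₁.hom ≫ pullback.snd x.hom (terminal.from (R.obj W)) = prod.snd := by
    exact aux_snd (Subsingleton.elim _ _)
  have d₁ : k₂.hom ≫ pullback.fst ((hat L).obj x).hom (terminal.from W) =
      (prod.fst : L.obj x.left ⨯ W ⟶ L.obj x.left) :=
    aux_fst (Subsingleton.elim _ _)
  have d₂ : k₂.hom ≫ pullback.snd ((hat L).obj x).hom (terminal.from W) =
      (prod.snd : L.obj x.left ⨯ W ⟶ W) :=
    aux_snd (Subsingleton.elim _ _)
  have key : L.map k₁.hom ≫ ((theta adj W).app x).left =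
      (prod.lift (L.map (prod.fst : x.left ⨯ R.obj W ⟶ x.left))
        (L.map (prod.snd : x.left ⨯ R.obj W ⟶ R.obj W) ≫ adj.counit.app W)) ≫ k₂.hom := by
    simp only [theta, Over.homMk_left]
    apply pullback.hom_ext
    · erw [Category.assoc, pullback.lift_fst, ← L.map_comp, c₁, Category.assoc, d₁]
      exact (prod.lift_fst _ _).symm
    · erw [Category.assoc, pullback.lift_snd, ← L.map_comp_assoc, c₂, Category.assoc, d₂]
      exact (prod.lift_snd _ _).symm
  have h : ((theta adj W).app x).left =
      L.map k₁.inv ≫ (prod.lift (L.map (prod.fst : x.left ⨯ R.obj W ⟶ x.left))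
        (L.map (prod.snd : x.left ⨯ R.obj W ⟶ R.obj W) ≫ adj.counit.app W)) ≫ k₂.hom := by
    erw [← key, ← L.map_comp_assoc, Iso.inv_hom_id, L.map_id, Category.id_comp]
  have hl : IsIso (((theta adj W).app x).left) := by
    rw [h]; refine IsIso.comp_isIso' (L.map_isIso k₁.inv) (IsIso.comp_isIso' ?_ inferInstance); exact this
  exact isIso_of_isIso_left _ hl

/-- The Frobenius square: pulling back to `R W` and applying `barL` agrees with applying
`hat L` and pulling back to `W`. -/
noncomputable def alphaIso (adj : L ⊣ R) (frob : FrobeniusReciprocity adj) (W : D) :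
    Over.pullback (terminal.from (R.obj W)) ⋙ barL adj W ≅
      hat L ⋙ Over.pullback (terminal.from W) := by
  haveI : ∀ x, IsIso ((theta adj W).app x) := isIso_theta_app adj frob W
  haveI : IsIso (theta adj W) := NatIso.isIso_of_isIso_app _
  exact asIso (theta adj W)

end Main

end FrobeniusSplitAux

open FrobeniusSplitAux

/-- If `L ⊣ R` (with `L : C ⥤ D`) is split by `Σ_D ⊣ D*` (i.e. `Σ_D ∘ L ≅ 𝟭 C`) and satisfies
Frobenius reciprocity, and `!_W : W ⟶ 1` is an effective descent morphism in `D`, then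
`!_{R W} : R W ⟶ 1` is an effective descent morphism in `C`. -/
theorem effectiveDescent_of_frobenius_split
    {C : Type u₁} [Category.{v₁} C] {D : Type u₂} [Category.{v₂} D]
    [HasFiniteLimits C] [HasFiniteLimits D]
    {SigD : D ⥤ C} {Dstar : C ⥤ D} (adjD : SigD ⊣ Dstar)
    {L : C ⥤ D} {R : D ⥤ C} (adj : L ⊣ R)
    (splitting : L ⋙ SigD ≅ 𝟭 C) (frob : FrobeniusReciprocity adj)
    (W : D) (hW : EffectiveDescentMorphism (terminal.from W)) :
    EffectiveDescentMorphism (terminal.from (R.obj W)) := by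
  obtain ⟨hMon⟩ := hW
  letI := hMon
  set GC := Over.pullback (terminal.from (R.obj W)) with hGC
  set GW := Over.pullback (terminal.from W) with hGW
  -- `GW` reflects isomorphisms since it is monadic
  haveI hGWrefl : GW.ReflectsIsomorphisms := by
    constructor
    intro a b u hu
    haveI : IsIso ((Monad.comparison (monadicAdjunction GW) ⋙
        (monadicAdjunction GW).toMonad.forget).map u) :=
      (NatIso.isIso_map_iff (Monad.comparisonForget (monadicAdjunction GW)) u).mpr hu
    exact isIso_of_reflects_iso u
      (Monad.comparison (monadicAdjunction GW) ⋙ (monadicAdjunction GW).toMonad.forget)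
  -- `barL` reflects isomorphisms thanks to the splitting
  haveI hbarLrefl : (barL adj W).ReflectsIsomorphisms := by
    constructor
    intro a b u hu
    haveI : IsIso (((barL adj W).map u).left) := (Over.forget W).map_isIso ((barL adj W).map u)
    haveI h2 : IsIso (L.map u.left) := by
      exact this
    haveI : IsIso ((L ⋙ SigD).map u.left) :=
      inferInstanceAs (IsIso (SigD.map (L.map u.left)))
    have h3 : IsIso u.left := by
      simpa using (NatIso.isIso_map_iff splitting u.left).mp this
    exact isIso_of_isIso_left u h3
  -- the key transfer of a `GC`-split pair to a `GW`-split pair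
  have keySplit : ∀ {a b : Over (⊤_ C)} (f g : a ⟶ b) [GC.IsSplitPair f g],
      GW.IsSplitPair ((hat L).map f) ((hat L).map g) := by
    intro a b f g hsp
    haveI := hsp
    haveI : HasSplitCoequalizer ((GC ⋙ barL adj W).map f) ((GC ⋙ barL adj W).map g) :=
      inferInstanceAs (HasSplitCoequalizer ((barL adj W).map (GC.map f))
        ((barL adj W).map (GC.map g)))
    exact hasSplitCoequalizer_of_natIso (alphaIso adj frob W) f g
  -- `GC` reflects isomorphisms
  haveI hGCrefl : GC.ReflectsIsomorphisms := by
    constructor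
    intro a b u hu
    haveI := hu
    haveI : IsIso ((GC ⋙ barL adj W).map u) :=
      inferInstanceAs (IsIso ((barL adj W).map (GC.map u)))
    haveI : IsIso ((hat L ⋙ GW).map u) :=
      (NatIso.isIso_map_iff (alphaIso adj frob W) u).mp this
    haveI : IsIso (GW.map ((hat L).map u)) := this
    haveI : IsIso ((hat L).map u) := isIso_of_reflects_iso _ GW
    haveI : IsIso ((hat L ⋙ hat SigD).map u) :=
      inferInstanceAs (IsIso ((hat SigD).map ((hat L).map u)))
    have := (NatIso.isIso_map_iff (shat splitting) u).mp this
    simpa using this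
  -- coequalizers of `GC`-split pairs exist
  haveI hHas : Monad.HasCoequalizerOfIsSplitPair GC := by
    constructor
    intro a b f g hsp
    haveI := hsp
    haveI := keySplit f g
    haveI : CreatesColimit (parallelPair ((hat L).map f) ((hat L).map g)) GW :=
      Monad.createsGSplitCoequalizersOfMonadic GW _ _
    have eD : parallelPair ((hat L).map f) ((hat L).map g) ⋙ GW ≅
        parallelPair (GW.map ((hat L).map f)) (GW.map ((hat L).map g)) :=
      diagramIsoParallelPair _
    haveI : HasColimit (parallelPair ((hat L).map f) ((hat L).map g) ⋙ GW) :=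
      hasColimit_of_iso eD
    haveI h1 : HasColimit (parallelPair ((hat L).map f) ((hat L).map g)) :=
      hasColimit_of_created _ GW
    have eL : parallelPair f g ⋙ hat L ≅
        parallelPair ((hat L).map f) ((hat L).map g) :=
      diagramIsoParallelPair _
    haveI h2 : HasColimit (parallelPair f g ⋙ hat L) :=
      hasColimit_of_iso eL
    haveI : PreservesColimit (parallelPair f g ⋙ hat L) (hat SigD) :=
      preservesColimit_hat adjD _
    haveI h3 : HasColimit ((parallelPair f g ⋙ hat L) ⋙ hat SigD) :=
      ⟨⟨⟨_, isColimitOfPreserves (hat SigD) (colimit.isColimit _)⟩⟩⟩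
    haveI : HasColimit (parallelPair f g ⋙ (hat L ⋙ hat SigD)) := h3
    have e₂ : parallelPair f g ≅ parallelPair f g ⋙ (hat L ⋙ hat SigD) :=
      (Functor.rightUnitor _).symm ≪≫ (Functor.isoWhiskerLeft (parallelPair f g) (shat splitting)).symm
    exact hasColimit_of_iso e₂
  -- `GC` preserves colimits of `GC`-split pairs
  haveI hPres : Monad.PreservesColimitOfIsSplitPair GC := by
    constructor
    intro a b f g hsp
    haveI := hsp
    haveI := keySplit f g
    haveI : CreatesColimit (parallelPair ((hat L).map f) ((hat L).map g)) GW :=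
      Monad.createsGSplitCoequalizersOfMonadic GW _ _
    have eD : parallelPair ((hat L).map f) ((hat L).map g) ⋙ GW ≅
        parallelPair (GW.map ((hat L).map f)) (GW.map ((hat L).map g)) :=
      diagramIsoParallelPair _
    haveI : HasColimit (parallelPair ((hat L).map f) ((hat L).map g) ⋙ GW) :=
      hasColimit_of_iso eD
    haveI : PreservesColimit (parallelPair ((hat L).map f) ((hat L).map g)) GW :=
      inferInstance
    have eL : parallelPair f g ⋙ hat L ≅
        parallelPair ((hat L).map f) ((hat L).map g) :=
      diagramIsoParallelPair _
    haveI : PreservesColimit (parallelPair f g ⋙ hat L) GW :=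
      preservesColimit_of_iso_diagram GW eL.symm
    haveI : PreservesColimit (parallelPair f g) (hat L) :=
      preservesColimit_hat adj _
    haveI : PreservesColimit (parallelPair f g) (hat L ⋙ GW) := inferInstance
    haveI : PreservesColimit (parallelPair f g) (GC ⋙ barL adj W) :=
      preservesColimit_of_natIso _ (alphaIso adj frob W).symm
    have eC : parallelPair f g ⋙ GC ≅ parallelPair (GC.map f) (GC.map g) :=
      diagramIsoParallelPair _
    haveI : HasColimit (parallelPair f g ⋙ GC) :=
      hasColimit_of_iso eC
    haveI : PreservesColimit (parallelPair (GC.map f) (GC.map g)) (barL adj W) :=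
      preservesColimit_parallelPair_of_split (barL adj W) _ _
    haveI : PreservesColimit (parallelPair f g ⋙ GC) (barL adj W) :=
      preservesColimit_of_iso_diagram (barL adj W) eC.symm
    haveI : ReflectsColimit (parallelPair f g ⋙ GC) (barL adj W) :=
      reflectsColimit_of_reflectsIsomorphisms _ _
    exact preservesColimit_of_reflects_of_preserves GC (barL adj W)
  exact ⟨Monad.monadicOfHasPreservesGSplitCoequalizersOfReflectsIsomorphisms
    (Over.mapPullbackAdj (terminal.from (R.obj W)))⟩
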